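/- Let m ≥ 2 and h ≥ 2, and let T(m,h) be the complete m-ary tree of height h. Then for every vertex v of depth d with 2 ≤ d ≤ h, Gain(T(m,h), Z(v), μ2) ≤ (α2 + β2)·(m^{h−1}−1)/(m−1) + (m−1)·β2·(m^h−1)/(m−1), and this bound is strictly smaller than Gain(T(m,h), Z(root), μ2) = m^{h+1}(m^h−1)/(m^{h+2}−m^{h+1}+m^h−1). -/

import Mathlib

/-- The competitive-diffusion payoff of Player 1 with starting vertex `x` against
starting vertex `y`: the number of vertices strictly closer to `x` than to `y`. -/
noncomputable def gain {V : Type*} (G : SimpleGraph V) (x y : V) : ℕ :=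
  {u : V | G.dist u x < G.dist u y}.ncard

/-- The expected gain of Player 1 playing mixed strategy `X` against mixed strategy `Y`. -/
noncomputable def Gain {V : Type*} (G : SimpleGraph V) [Fintype V] (X Y : V → ℝ) : ℝ :=
  ∑ x : V, ∑ y : V, X x * Y y * (gain G x y : ℝ)

/-- The pure strategy `Z(v)` concentrated on vertex `v`. -/
def pureStrat {V : Type*} [DecidableEq V] (v : V) : V → ℝ := fun u => if u = v then 1 else 0

/-- Vertices of the complete `m`-ary tree of height `h`: lists over `Fin m` of length
at most `h`; the length of the list is the depth of the vertex. -/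
def TreeVert (m h : ℕ) := {l : List (Fin m) // l.length ≤ h}

noncomputable instance (m h : ℕ) : Fintype (TreeVert m h) :=
  (List.finite_length_le (Fin m) h).fintype

instance (m h : ℕ) : DecidableEq (TreeVert m h) := Subtype.instDecidableEq

instance (m h : ℕ) : Nonempty (TreeVert m h) := ⟨⟨[], by simp⟩⟩

/-- The complete `m`-ary tree of height `h`: each vertex of depth `< h` has exactly
`m` children, obtained by prepending an element of `Fin m`. -/
def CompleteTree (m h : ℕ) : SimpleGraph (TreeVert m h) :=
  SimpleGraph.fromRel (fun x y => x.1 = y.1.tail ∧ y.1.length = x.1.length + 1)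

/-- The root of the complete `m`-ary tree. -/
def root (m h : ℕ) : TreeVert m h := ⟨[], by simp⟩

noncomputable def alpha1 (m h : ℕ) : ℝ :=
  ((m : ℝ) ^ h - 1) / ((m : ℝ) ^ (h + 2) - (m : ℝ) ^ (h + 1) + (m : ℝ) ^ h - 1)

noncomputable def beta1 (m h : ℕ) : ℝ :=
  ((m : ℝ) - 1) * (m : ℝ) ^ h / ((m : ℝ) ^ (h + 2) - (m : ℝ) ^ (h + 1) + (m : ℝ) ^ h - 1)

noncomputable def alpha2 (m h : ℕ) : ℝ :=
  ((m : ℝ) - 1) * ((m : ℝ) ^ (h + 1) - (m : ℝ) ^ h + 1) /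
    ((m : ℝ) ^ (h + 2) - (m : ℝ) ^ (h + 1) + (m : ℝ) ^ h - 1)

noncomputable def beta2 (m h : ℕ) : ℝ :=
  ((m : ℝ) ^ h - 1) / ((m : ℝ) ^ (h + 2) - (m : ℝ) ^ (h + 1) + (m : ℝ) ^ h - 1)

/-- The mixed strategy `μ₁`: probability `α₁` on the root, `β₁` on each depth-1 vertex. -/
noncomputable def mu1 (m h : ℕ) : TreeVert m h → ℝ := fun v =>
  if v.1.length = 0 then alpha1 m h else if v.1.length = 1 then beta1 m h else 0

/-- The mixed strategy `μ₂`: probability `α₂` on the root, `β₂` on each depth-1 vertex. -/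
noncomputable def mu2 (m h : ℕ) : TreeVert m h → ℝ := fun v =>
  if v.1.length = 0 then alpha2 m h else if v.1.length = 1 then beta2 m h else 0

section AuxCT

namespace CT
variable {m h : ℕ}

lemma adj_iff {x y : TreeVert m h} :
    (CompleteTree m h).Adj x y ↔ (∃ a, y.1 = a :: x.1) ∨ (∃ a, x.1 = a :: y.1) := by
  constructor
  · rintro ⟨hne, ⟨ht, hl⟩ | ⟨ht, hl⟩⟩
    · left
      rcases hy : y.1 with _ | ⟨a, t⟩
      · rw [hy] at hl; simp at hl
      · refine ⟨a, ?_⟩; rw [hy] at ht; simp at ht; rw [ht]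
    · right
      rcases hx : x.1 with _ | ⟨a, t⟩
      · rw [hx] at hl; simp at hl
      · refine ⟨a, ?_⟩; rw [hx] at ht; simp at ht; rw [ht]
  · rintro (⟨a, ha⟩ | ⟨a, ha⟩)
    · refine ⟨fun e => ?_, Or.inl ⟨by rw [ha]; rfl, by rw [ha]; rfl⟩⟩
      rw [e] at ha; simpa using congrArg List.length ha
    · refine ⟨fun e => ?_, Or.inr ⟨by rw [ha]; rfl, by rw [ha]; rfl⟩⟩
      rw [← e] at ha; simpa using congrArg List.length ha

/-- Walk from a suffix-vertex up to a vertex. -/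
lemma walk_of_suffix : ∀ (l : List (Fin m)) (hl : l.length ≤ h) (x : TreeVert m h)
    (hs : x.1 <:+ l), ∃ p : (CompleteTree m h).Walk x ⟨l, hl⟩,
      p.length = l.length - x.1.length := by
  intro l
  induction l with
  | nil =>
    intro hl x hs
    have hx : x = ⟨[], hl⟩ := Subtype.ext (List.suffix_nil.mp hs)
    subst hx
    exact ⟨SimpleGraph.Walk.nil, by simp; rfl⟩
  | cons a t ih =>
    intro hl x hs
    rcases List.suffix_cons_iff.mp hs with he | hs'
    · have hx : x = ⟨a :: t, hl⟩ := Subtype.ext he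
      subst hx
      exact ⟨SimpleGraph.Walk.nil, by simp [he]; rfl⟩
    · have ht : t.length ≤ h := le_trans (by simp) hl
      obtain ⟨p, hp⟩ := ih ht x hs'
      have hadj : (CompleteTree m h).Adj ⟨t, ht⟩ ⟨a :: t, hl⟩ :=
        adj_iff.mpr (Or.inl ⟨a, rfl⟩)
      refine ⟨p.concat hadj, ?_⟩
      refine (SimpleGraph.Walk.length_concat p hadj).trans ?_
      rw [hp]
      have := hs'.length_le
      simp; omega

lemma dist_le_of_suffix (x y : TreeVert m h) (hs : x.1 <:+ y.1) :
    (CompleteTree m h).dist x y ≤ y.1.length - x.1.length := by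
  obtain ⟨p, hp⟩ := walk_of_suffix y.1 y.2 x hs
  exact hp ▸ SimpleGraph.dist_le p

lemma connected : (CompleteTree m h).Connected := by
  refine ⟨fun x y => ?_⟩
  have rx : (CompleteTree m h).Reachable (root m h) x :=
    ⟨(walk_of_suffix x.1 x.2 (root m h) (List.nil_suffix)).choose⟩
  have ry : (CompleteTree m h).Reachable (root m h) y :=
    ⟨(walk_of_suffix y.1 y.2 (root m h) (List.nil_suffix)).choose⟩
  exact rx.symm.trans ry

/-- Lower bound on walk lengths via common suffixes. -/
lemma le_walk_length {x y : TreeVert m h} (p : (CompleteTree m h).Walk x y) :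
    ∀ (c : ℕ), (∀ t : List (Fin m), t <:+ x.1 → t <:+ y.1 → t.length ≤ c) →
    x.1.length + y.1.length ≤ p.length + 2 * c := by
  induction p with
  | nil =>
    intro c hc
    have := hc _ List.suffix_rfl List.suffix_rfl
    omega
  | @cons u u₁ y hadj q ih =>
    intro c hc
    rcases adj_iff.mp hadj with ⟨a, ha⟩ | ⟨a, ha⟩
    · -- u₁.1 = a :: u.1
      have h1 : u₁.1.length = u.1.length + 1 := by rw [ha]; simp
      have := ih (c + 1) (fun t ht hty => ?_)
      · simp only [SimpleGraph.Walk.length_cons]; omega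
      rw [ha] at ht
      rcases List.suffix_cons_iff.mp ht with he | ht'
      · have : u.1 <:+ y.1 := by
          have : u.1 <:+ t := he ▸ List.suffix_cons a u.1
          exact this.trans hty
        have := hc u.1 List.suffix_rfl this
        have : t.length = u.1.length + 1 := by rw [he]; simp
        omega
      · exact le_trans (hc t ht' hty) (Nat.le_succ c)
    · -- u.1 = a :: u₁.1
      have h1 : u.1.length = u₁.1.length + 1 := by rw [ha]; simp
      have := ih c (fun t ht hty => hc t (by rw [ha]; exact ht.trans (List.suffix_cons a u₁.1)) hty)
      simp only [SimpleGraph.Walk.length_cons]; omega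

lemma le_dist {x y : TreeVert m h} (c : ℕ)
    (hc : ∀ t : List (Fin m), t <:+ x.1 → t <:+ y.1 → t.length ≤ c) :
    x.1.length + y.1.length ≤ (CompleteTree m h).dist x y + 2 * c := by
  obtain ⟨p, hp⟩ := connected.exists_walk_length_eq_dist x y
  exact hp ▸ le_walk_length p c hc

end CT

namespace CT
variable {m h : ℕ}

lemma dist_root (u : TreeVert m h) : (CompleteTree m h).dist u (root m h) = u.1.length := by
  have hle : (CompleteTree m h).dist u (root m h) ≤ u.1.length := by
    rw [SimpleGraph.dist_comm]
    simpa [root] using dist_le_of_suffix (root m h) u List.nil_suffix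
  have hge := le_dist (x := u) (y := root m h) 0 (fun t ht hty => by
    have ht0 : t = [] := List.suffix_nil.mp hty
    simp [ht0])
  have hr : (root m h).1.length = 0 := rfl
  omega

/-- distance to a depth-1 vertex, when it is an ancestor -/
lemma dist_depth1_anc (u : TreeVert m h) (w : TreeVert m h) (hw : w.1.length = 1)
    (hanc : w.1 <:+ u.1) :
    (CompleteTree m h).dist u w = u.1.length - 1 := by
  have hle : (CompleteTree m h).dist u w ≤ u.1.length - 1 := by
    rw [SimpleGraph.dist_comm]
    have := dist_le_of_suffix w u hanc
    omega
  have hge := le_dist (x := u) (y := w) 1 (fun t ht hty => hw ▸ hty.length_le)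
  have h1 : 1 ≤ u.1.length := hw ▸ hanc.length_le
  omega

/-- distance to a depth-1 vertex, when it is not an ancestor: at least |u|+1 -/
lemma dist_depth1_nonanc (u : TreeVert m h) (w : TreeVert m h) (hw : w.1.length = 1)
    (hanc : ¬ w.1 <:+ u.1) :
    u.1.length + 1 ≤ (CompleteTree m h).dist u w := by
  have hge := le_dist (x := u) (y := w) 0 (fun t ht hty => ?_)
  · omega
  · obtain ⟨a, ha⟩ := List.length_eq_one_iff.mp hw
    rw [ha] at hty
    rcases List.suffix_cons_iff.mp hty with he | ht'
    · exact absurd (ha ▸ he ▸ ht) hanc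
    · simpa using ht'.length_le

lemma dist_depth1_le (u : TreeVert m h) (w : TreeVert m h) (hw : w.1.length = 1) :
    (CompleteTree m h).dist u w ≤ u.1.length + 1 := by
  have := connected.dist_triangle (u := u) (v := root m h) (w := w)
  have h1 := dist_root u
  have h2 : (CompleteTree m h).dist (root m h) w ≤ 1 := by
    simpa [hw, root] using dist_le_of_suffix (root m h) w List.nil_suffix
  omega

/-- nested suffixes -/
lemma suffix_drop_of_suffix {t v : List (Fin m)} (ht : t <:+ v) {k : ℕ} (hk : k ≤ t.length) :
    v.drop (v.length - k) <:+ t := by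
  obtain ⟨w, rfl⟩ := ht
  have hlen : (w ++ t).length = w.length + t.length := by simp
  have : (w ++ t).length - k = w.length + (t.length - k) := by omega
  rw [this, ← List.drop_drop, List.drop_left]
  exact List.drop_suffix _ _

/-- key lower bound: if the depth-k suffix of v is not a suffix of u then
    dist u v ≥ |u| + |v| - 2(k-1) -/
lemma dist_lower_of_not_suffix (u v : TreeVert m h) (k : ℕ) (hk : 1 ≤ k)
    (hkv : k ≤ v.1.length)
    (hns : ¬ (v.1.drop (v.1.length - k) <:+ u.1)) :
    u.1.length + v.1.length ≤ (CompleteTree m h).dist u v + 2 * (k - 1) := by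
  refine le_dist (k - 1) (fun t htu htv => ?_)
  by_contra hlt
  push_neg at hlt
  have hkt : k ≤ t.length := by omega
  exact hns ((suffix_drop_of_suffix htv hkt).trans htu)

end CT

def Ntv (m k : ℕ) : ℕ := ∑ j ∈ Finset.range (k+1), m^j

namespace CT
variable {m h : ℕ}

def lenLeEquiv (m k : ℕ) : TreeVert m k ≃ Σ i : Fin (k+1), (Fin i.1 → Fin m) where
  toFun l := ⟨⟨l.1.length, by have := l.2; omega⟩, l.1.get⟩
  invFun p := ⟨List.ofFn p.2, by simpa using by have := p.1.2; omega⟩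
  left_inv l := Subtype.ext (List.ofFn_get l.1)
  right_inv p := by
    rcases p with ⟨⟨i, hi⟩, f⟩
    refine Sigma.ext (by simp) ?_
    have hl : (List.ofFn f).length = i := by simp
    rw [Fin.heq_fun_iff hl]
    intro j
    simp [List.get_ofFn]

lemma card_treeVert (m k : ℕ) : Nat.card (TreeVert m k) = Ntv m k := by
  rw [Nat.card_congr (lenLeEquiv m k), Nat.card_eq_fintype_card, Fintype.card_sigma]
  simp [Ntv, Fin.sum_univ_eq_sum_range]

end CT

namespace CT
variable {m h : ℕ}

def suffixEquiv (s : List (Fin m)) (hs : s.length ≤ h) :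
    {u : TreeVert m h // s <:+ u.1} ≃ TreeVert m (h - s.length) where
  toFun u := ⟨u.1.1.take (u.1.1.length - s.length), by
    have h1 := u.2.length_le
    have h2 := u.1.2
    simp only [List.length_take]
    omega⟩
  invFun l := ⟨⟨l.1 ++ s, by have := l.2; simp; omega⟩, ⟨l.1, rfl⟩⟩
  left_inv u := by
    obtain ⟨⟨l, hl⟩, w, hw⟩ := u
    simp only at hw
    subst hw
    refine Subtype.ext (Subtype.ext ?_)
    simp only [List.length_append]
    rw [show w.length + s.length - s.length = w.length by omega, List.take_left]
  right_inv l := by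
    refine Subtype.ext ?_
    simp only [List.length_append]
    rw [show l.1.length + s.length - s.length = l.1.length by omega, List.take_left]

lemma ncard_suffix (s : List (Fin m)) (hs : s.length ≤ h) :
    {u : TreeVert m h | s <:+ u.1}.ncard = Ntv m (h - s.length) := by
  rw [← Nat.card_coe_set_eq, ← card_treeVert m (h - s.length)]
  exact Nat.card_congr (suffixEquiv s hs)

lemma ncard_not_suffix (s : List (Fin m)) (hs : s.length ≤ h) :
    {u : TreeVert m h | ¬ s <:+ u.1}.ncard = Ntv m h - Ntv m (h - s.length) := by
  have h1 := Set.ncard_add_ncard_compl {u : TreeVert m h | s <:+ u.1}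
  have h2 : {u : TreeVert m h | ¬ s <:+ u.1} = {u : TreeVert m h | s <:+ u.1}ᶜ := by
    ext u; simp
  rw [h2, ← card_treeVert m h] at *
  rw [ncard_suffix s hs] at h1
  omega

end CT

namespace CT
variable {m h : ℕ}

lemma Ntv_succ (k : ℕ) : Ntv m (k+1) = Ntv m k + m^(k+1) := Finset.sum_range_succ _ _

lemma gain_root_depth1 (hh : 1 ≤ h) (w : TreeVert m h) (hw : w.1.length = 1) :
    gain (CompleteTree m h) (root m h) w = m ^ h := by
  unfold gain
  have hset : {u : TreeVert m h | (CompleteTree m h).dist u (root m h) < (CompleteTree m h).dist u w}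
      = {u : TreeVert m h | ¬ w.1 <:+ u.1} := by
    ext u
    simp only [Set.mem_setOf_eq, dist_root]
    constructor
    · intro hlt hsuf
      have := dist_depth1_anc u w hw hsuf
      omega
    · intro hns
      have := dist_depth1_nonanc u w hw hns
      omega
  rw [hset, ncard_not_suffix w.1 (hw ▸ hh), hw]
  obtain ⟨k, rfl⟩ : ∃ k, h = k + 1 := ⟨h - 1, by omega⟩
  rw [Ntv_succ]
  simp

lemma gain_le_of_subset (v y : TreeVert m h) (s : List (Fin m)) (hs : s.length ≤ h)
    (hsub : ∀ u : TreeVert m h, (CompleteTree m h).dist u v < (CompleteTree m h).dist u y →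
      s <:+ u.1) :
    gain (CompleteTree m h) v y ≤ Ntv m (h - s.length) := by
  rw [← ncard_suffix s hs]
  exact Set.ncard_le_ncard (fun u hu => hsub u hu) (Set.toFinite _)

lemma gain_v_root (v : TreeVert m h) (hv : 2 ≤ v.1.length) :
    gain (CompleteTree m h) v (root m h) ≤ Ntv m (h - 2) := by
  have hs2len : (v.1.drop (v.1.length - 2)).length = 2 := by
    simp only [List.length_drop]; omega
  have key : ∀ u : TreeVert m h, (CompleteTree m h).dist u v < (CompleteTree m h).dist u (root m h) →
      v.1.drop (v.1.length - 2) <:+ u.1 := by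
    intro u hlt
    by_contra hns
    have hd := dist_lower_of_not_suffix u v 2 (by norm_num) hv hns
    rw [dist_root] at hlt
    omega
  have := gain_le_of_subset v (root m h) (v.1.drop (v.1.length - 2))
    (by rw [hs2len]; exact le_trans hv v.2) key
  rwa [hs2len] at this

lemma gain_v_depth1 (v : TreeVert m h) (hv : 2 ≤ v.1.length)
    (w : TreeVert m h) (hw : w.1.length = 1) :
    gain (CompleteTree m h) v w ≤ Ntv m (h - 1) := by
  have hs1len : (v.1.drop (v.1.length - 1)).length = 1 := by
    simp only [List.length_drop]; omega
  have key : ∀ u : TreeVert m h, (CompleteTree m h).dist u v < (CompleteTree m h).dist u w →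
      v.1.drop (v.1.length - 1) <:+ u.1 := by
    intro u hlt
    by_contra hns
    have hd := dist_lower_of_not_suffix u v 1 le_rfl (by omega) hns
    have hub := dist_depth1_le u w hw
    omega
  have := gain_le_of_subset v w (v.1.drop (v.1.length - 1))
    (by rw [hs1len]; exact le_trans (by omega) v.2) key
  rwa [hs1len] at this

lemma gain_v_anc (v : TreeVert m h) (hv : 2 ≤ v.1.length)
    (w : TreeVert m h) (hw : w.1 = v.1.drop (v.1.length - 1)) :
    gain (CompleteTree m h) v w ≤ Ntv m (h - 2) := by
  have hwlen : w.1.length = 1 := by rw [hw]; simp only [List.length_drop]; omega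
  have hs2len : (v.1.drop (v.1.length - 2)).length = 2 := by
    simp only [List.length_drop]; omega
  have key : ∀ u : TreeVert m h, (CompleteTree m h).dist u v < (CompleteTree m h).dist u w →
      v.1.drop (v.1.length - 2) <:+ u.1 := by
    intro u hlt
    by_contra hns
    by_cases hanc : w.1 <:+ u.1
    · have hda := dist_depth1_anc u w hwlen hanc
      have hd := dist_lower_of_not_suffix u v 2 (by norm_num) hv hns
      omega
    · have hns1 : ¬ (v.1.drop (v.1.length - 1) <:+ u.1) := hw ▸ hanc
      have hd := dist_lower_of_not_suffix u v 1 le_rfl (by omega) hns1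
      have hub := dist_depth1_le u w hwlen
      omega
  have := gain_le_of_subset v w (v.1.drop (v.1.length - 2))
    (by rw [hs2len]; exact le_trans hv v.2) key
  rwa [hs2len] at this

end CT


lemma Gain_pure {V : Type*} [Fintype V] [DecidableEq V] (G : SimpleGraph V) (v : V) (Y : V → ℝ) :
    Gain G (pureStrat v) Y = ∑ y : V, Y y * (gain G v y : ℝ) := by
  unfold Gain pureStrat
  rw [Finset.sum_eq_single v]
  · simp
  · intro b _ hb; simp [hb]
  · simp

lemma gain_self {V : Type*} (G : SimpleGraph V) (x : V) : gain G x x = 0 := by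
  unfold gain
  convert Set.ncard_empty V
  ext u; simp


namespace CT
variable {m h : ℕ}

def embd (m : ℕ) {h : ℕ} (hh : 1 ≤ h) (a : Fin m) : TreeVert m h := ⟨[a], by simpa using hh⟩

lemma sum_mu2_mul (hh : 1 ≤ h) (g : TreeVert m h → ℝ) :
    ∑ y : TreeVert m h, mu2 m h y * g y
      = alpha2 m h * g (root m h)
        + ∑ a : Fin m, beta2 m h * g (embd m hh a) := by
  classical
  set emb : Fin m → TreeVert m h := fun a => embd m hh a with hemb
  have hroot : root m h ∉ Finset.univ.image emb := by
    intro hmem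
    obtain ⟨a, -, ha⟩ := Finset.mem_image.mp hmem
    have := congrArg (fun t : TreeVert m h => t.1) ha
    simp [emb, embd, root] at this
  have hsub : insert (root m h) (Finset.univ.image emb) ⊆ Finset.univ := Finset.subset_univ _
  rw [← Finset.sum_subset hsub ?hv]
  case hv =>
    intro y _ hy
    have h0 : y.1.length ≠ 0 := by
      intro h0
      have : y = root m h := Subtype.ext (List.length_eq_zero_iff.mp h0)
      exact hy (this ▸ Finset.mem_insert_self _ _)
    have h1 : y.1.length ≠ 1 := by
      intro h1
      obtain ⟨a, ha⟩ := List.length_eq_one_iff.mp h1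
      exact hy (Finset.mem_insert_of_mem (Finset.mem_image.mpr
        ⟨a, Finset.mem_univ a, Subtype.ext ha.symm⟩))
    simp [mu2, h0, h1]
  · rw [Finset.sum_insert hroot,
      Finset.sum_image (fun a _ b _ e => by
        have := congrArg (fun t : TreeVert m h => t.1) e
        simpa [emb, embd] using this)]
    have h1 : mu2 m h (root m h) = alpha2 m h := by simp [mu2, root]
    have h2 : ∀ a : Fin m, mu2 m h (emb a) = beta2 m h := fun a => by simp [mu2, emb, embd]
    simp only [h1, h2]
    rfl

end CT



lemma CT.key_ineq (K R : ℝ) (hK : 2 ≤ K) (hR : 1 ≤ R) :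
    ((K-1)*(K^3*R - K^2*R + 1)/(K^4*R - K^3*R + K^2*R - 1)
       + (K^2*R - 1)/(K^4*R - K^3*R + K^2*R - 1))*((K*R - 1)/(K-1))
      + (K-1)*((K^2*R - 1)/(K^4*R - K^3*R + K^2*R - 1))*((K^2*R-1)/(K-1))
      < K^3*R*(K^2*R-1)/(K^4*R - K^3*R + K^2*R - 1) := by
  have hKK : (3:ℝ) ≤ K^2 - K + 1 := by nlinarith
  have h14 : (4:ℝ) ≤ K^2*R := by nlinarith
  have hD : (0:ℝ) < K^4*R - K^3*R + K^2*R - 1 := by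
    nlinarith [mul_le_mul h14 hKK (by norm_num) (by positivity : (0:ℝ) ≤ K^2*R)]
  have hK1 : (0:ℝ) < K - 1 := by linarith
  have hP : (0:ℝ) < (K^4*R - K^3*R + K^2*R - 1) * (K-1) := by positivity
  have e1 : ((K-1)*(K^3*R - K^2*R + 1)/(K^4*R - K^3*R + K^2*R - 1)
       + (K^2*R - 1)/(K^4*R - K^3*R + K^2*R - 1))*((K*R - 1)/(K-1))
      + (K-1)*((K^2*R - 1)/(K^4*R - K^3*R + K^2*R - 1))*((K^2*R-1)/(K-1))
      = (((K-1)*(K^3*R - K^2*R + 1) + (K^2*R - 1))*(K*R - 1)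
          + ((K-1)*(K^2*R - 1))*(K^2*R-1)) / ((K^4*R - K^3*R + K^2*R - 1) * (K-1)) := by
    field_simp
  have e2 : K^3*R*(K^2*R-1)/(K^4*R - K^3*R + K^2*R - 1)
      = (K^3*R*(K^2*R-1)*(K-1)) / ((K^4*R - K^3*R + K^2*R - 1) * (K-1)) := by
    rw [mul_div_mul_right _ _ (ne_of_gt hK1)]
  rw [e1, e2, div_lt_div_iff_of_pos_right hP]
  have h2 : (0:ℝ) ≤ K - 2 := by linarith
  have h3 : (0:ℝ) ≤ R - 1 := by linarith
  have key : K^3*R*(K^2*R-1)*(K-1) - (((K-1)*(K^3*R - K^2*R + 1) + (K^2*R - 1))*(K*R - 1)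
          + ((K-1)*(K^2*R - 1))*(K^2*R-1))
      = 7 + 8 * (R-1) + 34 * (K-2) + 58 * (K-2) * (R-1) + 24 * (K-2) * (R-1)^2 + 65 * (K-2)^2 + 125 * (K-2)^2 * (R-1) + 60 * (K-2)^2 * (R-1)^2 + 63 * (K-2)^3 + 125 * (K-2)^3 * (R-1) + 62 * (K-2)^3 * (R-1)^2 + 33 * (K-2)^4 + 66 * (K-2)^4 * (R-1) + 33 * (K-2)^4 * (R-1)^2 + 9 * (K-2)^5 + 18 * (K-2)^5 * (R-1) + 9 * (K-2)^5 * (R-1)^2 + (K-2)^6 + 2 * (K-2)^6 * (R-1) + (K-2)^6 * (R-1)^2 := by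
    ring
  nlinarith [key, sq_nonneg (K-2), sq_nonneg (R-1), mul_nonneg h2 h3,
    pow_nonneg h2 3, pow_nonneg h2 4, pow_nonneg h2 5, pow_nonneg h2 6,
    mul_nonneg (mul_nonneg h2 h3) h3, mul_nonneg (pow_nonneg h2 2) h3,
    mul_nonneg (mul_nonneg (pow_nonneg h2 2) h3) h3,
    mul_nonneg (pow_nonneg h2 3) h3, mul_nonneg (mul_nonneg (pow_nonneg h2 3) h3) h3,
    mul_nonneg (pow_nonneg h2 4) h3, mul_nonneg (mul_nonneg (pow_nonneg h2 4) h3) h3,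
    mul_nonneg (pow_nonneg h2 5) h3, mul_nonneg (mul_nonneg (pow_nonneg h2 5) h3) h3,
    mul_nonneg (pow_nonneg h2 6) h3, mul_nonneg (mul_nonneg (pow_nonneg h2 6) h3) h3]

namespace CT
lemma Ntv_cast {m : ℕ} (hm : 2 ≤ m) (k : ℕ) :
    ((Ntv m k : ℕ) : ℝ) = ((m:ℝ)^(k+1) - 1)/((m:ℝ) - 1) := by
  have hne : ((m:ℝ)) ≠ 1 := by
    have : (2:ℝ) ≤ m := by exact_mod_cast hm
    linarith
  rw [Ntv]
  push_cast
  rw [geom_sum_eq hne]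
end CT

end AuxCT

/-- On the complete `m`-ary tree of height `h ≥ 2`, for every vertex `v` of depth
`2 ≤ d ≤ h`, `Gain(T, Z(v), μ₂) ≤ (α₂+β₂)(m^{h-1}-1)/(m-1) + (m-1)β₂(m^h-1)/(m-1)`,
and this bound is strictly smaller than
`Gain(T, Z(root), μ₂) = m^{h+1}(m^h-1)/(m^{h+2}-m^{h+1}+m^h-1)`. -/
theorem stmt_17 (m h : ℕ) (hm : 2 ≤ m) (hh : 2 ≤ h) :
    (∀ v : TreeVert m h, 2 ≤ v.1.length →
      Gain (CompleteTree m h) (pureStrat v) (mu2 m h) ≤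
        (alpha2 m h + beta2 m h) * (((m : ℝ) ^ (h - 1) - 1) / ((m : ℝ) - 1)) +
          ((m : ℝ) - 1) * beta2 m h * (((m : ℝ) ^ h - 1) / ((m : ℝ) - 1))) ∧
    (alpha2 m h + beta2 m h) * (((m : ℝ) ^ (h - 1) - 1) / ((m : ℝ) - 1)) +
        ((m : ℝ) - 1) * beta2 m h * (((m : ℝ) ^ h - 1) / ((m : ℝ) - 1)) <
      Gain (CompleteTree m h) (pureStrat (root m h)) (mu2 m h) ∧
    Gain (CompleteTree m h) (pureStrat (root m h)) (mu2 m h) =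
      (m : ℝ) ^ (h + 1) * ((m : ℝ) ^ h - 1) /
        ((m : ℝ) ^ (h + 2) - (m : ℝ) ^ (h + 1) + (m : ℝ) ^ h - 1) := by
  have hh1 : 1 ≤ h := by omega
  have hm1 : 1 ≤ m := by omega
  have hK : (2:ℝ) ≤ (m:ℝ) := by exact_mod_cast hm
  have hK1 : (0:ℝ) < (m:ℝ) - 1 := by linarith
  have hRge : (1:ℝ) ≤ (m:ℝ)^(h-2) := one_le_pow₀ (by linarith)
  have E1 : (m:ℝ)^(h-1) = (m:ℝ)*(m:ℝ)^(h-2) := by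
    rw [← pow_succ']; congr 1; omega
  have E2 : (m:ℝ)^h = (m:ℝ)^2*(m:ℝ)^(h-2) := by
    rw [← pow_add]; congr 1; omega
  have E3 : (m:ℝ)^(h+1) = (m:ℝ)^3*(m:ℝ)^(h-2) := by
    rw [← pow_add]; congr 1; omega
  have E4 : (m:ℝ)^(h+2) = (m:ℝ)^4*(m:ℝ)^(h-2) := by
    rw [← pow_add]; congr 1; omega
  have hKK : (3:ℝ) ≤ (m:ℝ)^2 - (m:ℝ) + 1 := by nlinarith
  have h14 : (4:ℝ) ≤ (m:ℝ)^2*(m:ℝ)^(h-2) := by nlinarith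
  have hDpos : (0:ℝ) < (m:ℝ)^(h+2) - (m:ℝ)^(h+1) + (m:ℝ)^h - 1 := by
    rw [E4, E3, E2]
    nlinarith [mul_le_mul h14 hKK (by norm_num) (by positivity : (0:ℝ) ≤ (m:ℝ)^2*(m:ℝ)^(h-2))]
  have ha2 : 0 ≤ alpha2 m h := by
    simp only [alpha2]
    apply div_nonneg _ hDpos.le
    rw [E3, E2]
    nlinarith
  have hb2 : 0 ≤ beta2 m h := by
    simp only [beta2]
    apply div_nonneg _ hDpos.le
    have : (1:ℝ) ≤ (m:ℝ)^h := one_le_pow₀ (by linarith)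
    linarith
  -- Part 3: exact value of Gain at the root
  have part3 : Gain (CompleteTree m h) (pureStrat (root m h)) (mu2 m h) =
      (m : ℝ) ^ (h + 1) * ((m : ℝ) ^ h - 1) /
        ((m : ℝ) ^ (h + 2) - (m : ℝ) ^ (h + 1) + (m : ℝ) ^ h - 1) := by
    rw [Gain_pure, CT.sum_mu2_mul hh1, gain_self]
    have hsum : ∀ a ∈ (Finset.univ : Finset (Fin m)),
        beta2 m h * ((gain (CompleteTree m h) (root m h) (CT.embd m hh1 a) : ℕ) : ℝ)
          = beta2 m h * (m:ℝ)^h := by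
      intro a _
      rw [CT.gain_root_depth1 hh1 (CT.embd m hh1 a) rfl]
      push_cast
      ring
    rw [Finset.sum_congr rfl hsum, Finset.sum_const, Finset.card_univ, Fintype.card_fin,
      nsmul_eq_mul]
    simp only [beta2]
    push_cast
    ring
  refine ⟨?_, ?_, part3⟩
  · -- Part 1
    intro v hv
    rw [Gain_pure, CT.sum_mu2_mul hh1]
    have hs1len : (v.1.drop (v.1.length - 1)).length = 1 := by
      simp only [List.length_drop]; omega
    obtain ⟨a0, ha0⟩ := List.length_eq_one_iff.mp hs1len
    have hg0 : ((gain (CompleteTree m h) v (root m h) : ℕ) : ℝ) ≤ ((Ntv m (h-2) : ℕ) : ℝ) := by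
      exact_mod_cast CT.gain_v_root v hv
    have hganc : ((gain (CompleteTree m h) v (CT.embd m hh1 a0) : ℕ) : ℝ)
        ≤ ((Ntv m (h-2) : ℕ) : ℝ) := by
      exact_mod_cast CT.gain_v_anc v hv (CT.embd m hh1 a0) (by simp [CT.embd, ha0])
    have hga : ∀ a : Fin m, ((gain (CompleteTree m h) v (CT.embd m hh1 a) : ℕ) : ℝ)
        ≤ ((Ntv m (h-1) : ℕ) : ℝ) := fun a => by
      exact_mod_cast CT.gain_v_depth1 v hv (CT.embd m hh1 a) rfl
    have hsplit : ∑ a : Fin m,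
          beta2 m h * ((gain (CompleteTree m h) v (CT.embd m hh1 a) : ℕ) : ℝ)
        = beta2 m h * ((gain (CompleteTree m h) v (CT.embd m hh1 a0) : ℕ) : ℝ)
          + ∑ a ∈ Finset.univ.erase a0,
              beta2 m h * ((gain (CompleteTree m h) v (CT.embd m hh1 a) : ℕ) : ℝ) :=
      (Finset.add_sum_erase _ _ (Finset.mem_univ a0)).symm
    rw [hsplit]
    have hcard : (Finset.univ.erase a0).card = m - 1 := by
      rw [Finset.card_erase_of_mem (Finset.mem_univ _), Finset.card_univ, Fintype.card_fin]
    have herase : ∑ a ∈ Finset.univ.erase a0,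
          beta2 m h * ((gain (CompleteTree m h) v (CT.embd m hh1 a) : ℕ) : ℝ)
        ≤ ((m:ℝ) - 1) * (beta2 m h * ((Ntv m (h-1) : ℕ) : ℝ)) := by
      have := Finset.sum_le_card_nsmul (Finset.univ.erase a0)
        (fun a => beta2 m h * ((gain (CompleteTree m h) v (CT.embd m hh1 a) : ℕ) : ℝ))
        (beta2 m h * ((Ntv m (h-1) : ℕ) : ℝ))
        (fun a _ => mul_le_mul_of_nonneg_left (hga a) hb2)
      rw [hcard, nsmul_eq_mul] at this
      have hcast : ((m - 1 : ℕ) : ℝ) = (m:ℝ) - 1 := by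
        push_cast [Nat.cast_sub hm1]; ring
      rwa [hcast] at this
    have total : alpha2 m h * ((gain (CompleteTree m h) v (root m h) : ℕ) : ℝ)
          + (beta2 m h * ((gain (CompleteTree m h) v (CT.embd m hh1 a0) : ℕ) : ℝ)
            + ∑ a ∈ Finset.univ.erase a0,
                beta2 m h * ((gain (CompleteTree m h) v (CT.embd m hh1 a) : ℕ) : ℝ))
        ≤ alpha2 m h * ((Ntv m (h-2) : ℕ) : ℝ)
          + (beta2 m h * ((Ntv m (h-2) : ℕ) : ℝ)
            + ((m:ℝ) - 1) * (beta2 m h * ((Ntv m (h-1) : ℕ) : ℝ))) :=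
      add_le_add (mul_le_mul_of_nonneg_left hg0 ha2)
        (add_le_add (mul_le_mul_of_nonneg_left hganc hb2) herase)
    refine le_trans total (le_of_eq ?_)
    rw [CT.Ntv_cast hm (h-2), CT.Ntv_cast hm (h-1),
      show h - 2 + 1 = h - 1 by omega, show h - 1 + 1 = h by omega]
    ring
  · -- Part 2
    rw [part3]
    simp only [alpha2, beta2]
    rw [E1, E2, E3, E4]
    exact CT.key_ineq (m:ℝ) ((m:ℝ)^(h-2)) hK hRge
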